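/- Let (W,S) be the dihedral Coxeter system I_2(m) with m ≥ 3, S = {s, t}, and let c = s t. Then every simple dual braid for c is a rational permutation braid: the identity element, the element bc := b_s b_t, and every element of T_c (the set of entries of tuples in the Hurwitz orbit of (b_s, b_t)) can each be written in the form b_x b_y⁻¹ with x, y ∈ W, hence each lies in the interval [Δ⁻¹, Δ] of B(W). -/

import Mathlib

/-- The set of Artin–Tits (braid) relations associated to a Coxeter matrix `M`. -/
def artinRels {B : Type} (M : CoxeterMatrix B) : Set (FreeGroup B) :=
  ⋃ (i : B) (j : B),
    {((CoxeterSystem.braidWord M i j).map FreeGroup.of).prod *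
      (((CoxeterSystem.braidWord M j i).map FreeGroup.of).prod)⁻¹}

/-- The Artin–Tits group attached to a Coxeter matrix. -/
abbrev ArtinGroup {B : Type} (M : CoxeterMatrix B) : Type := PresentedGroup (artinRels M)

/-- The Artin generators `b_s`. -/
def artinGen {B : Type} (M : CoxeterMatrix B) (i : B) : ArtinGroup M :=
  PresentedGroup.of i

/-- The Artin–Tits monoid `B⁺(W)`, viewed as the submonoid of `B(W)` generated by the
Artin generators. -/
def artinPos {B : Type} (M : CoxeterMatrix B) : Submonoid (ArtinGroup M) :=
  Submonoid.closure (Set.range (artinGen M))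

/-- Left divisibility `u ≼ v` in the Artin–Tits group. -/
def braidLE {B : Type} {M : CoxeterMatrix B} (u v : ArtinGroup M) : Prop :=
  u⁻¹ * v ∈ artinPos M

/-- One Hurwitz move: a standard generator of the braid group acts on an adjacent pair
`(x, y)` of entries by `(x, y) ↦ (x y x⁻¹, x)`. -/
def HurwitzMove {G : Type} [Group G] (l l' : List G) : Prop :=
  ∃ (a b : List G) (x y : G), l = a ++ x :: y :: b ∧ l' = a ++ (x * y * x⁻¹) :: x :: b

/-- The orbit of a tuple (encoded as a list) under the Hurwitz action of the braid
group (the equivalence closure of the Hurwitz moves). -/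
def hurwitzOrbit {G : Type} [Group G] (l : List G) : Set (List G) :=
  { l' | Relation.EqvGen HurwitzMove l l' }


namespace DualAux
open CoxeterSystem List

variable {m : ℕ} {W : Type} [Group W] {M : CoxeterMatrix (Fin 2)} (cs : CoxeterSystem M W)



/-- last letter of the alternating word of length `k` ending pattern ...0101 (starts with 0). -/
def lA (k : ℕ) : Fin 2 := if Even k then 1 else 0
/-- last letter of the alternating word of length `k` starting with 1. -/
def lB (k : ℕ) : Fin 2 := if Even k then 0 else 1

lemma lA_succ (k : ℕ) : lA (k + 1) = lB k := by
  rcases Nat.even_or_odd k with h | h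
  · simp [lA, lB, Nat.even_add_one, h]
  · simp [lA, lB, Nat.even_add_one, Nat.not_even_iff_odd.mpr h]

lemma lB_succ (k : ℕ) : lB (k + 1) = lA k := by
  rcases Nat.even_or_odd k with h | h
  · simp [lA, lB, Nat.even_add_one, h]
  · simp [lA, lB, Nat.even_add_one, Nat.not_even_iff_odd.mpr h]

/-- the alternating word of length `k` starting with `0`. -/
def Astr (k : ℕ) : List (Fin 2) := CoxeterSystem.alternatingWord (lB k) (lA k) k
/-- the alternating word of length `k` starting with `1`. -/
def Bstr (k : ℕ) : List (Fin 2) := CoxeterSystem.alternatingWord (lA k) (lB k) k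

lemma Astr_zero : Astr 0 = [] := rfl
lemma Bstr_zero : Bstr 0 = [] := rfl

lemma Astr_succ (k : ℕ) : Astr (k + 1) = Astr k ++ [lA (k + 1)] := by
  rw [Astr, alternatingWord_succ, concat_eq_append, lA_succ, lB_succ]
  rfl

lemma Bstr_succ (k : ℕ) : Bstr (k + 1) = Bstr k ++ [lB (k + 1)] := by
  rw [Bstr, alternatingWord_succ, concat_eq_append, lB_succ, lA_succ]
  rfl

lemma Astr_cons (k : ℕ) : Astr (k + 1) = 0 :: Bstr k := by
  rw [Astr, alternatingWord_succ', lA_succ, lB_succ, Bstr]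
  congr 1
  rcases Nat.even_or_odd k with h | h
  · simp [lA, lB, h]
  · simp [lA, lB, Nat.not_even_iff_odd.mpr h]

lemma Bstr_cons (k : ℕ) : Bstr (k + 1) = 1 :: Astr k := by
  rw [Bstr, alternatingWord_succ', lA_succ, lB_succ, Astr]
  congr 1
  rcases Nat.even_or_odd k with h | h
  · simp [lA, lB, h]
  · simp [lA, lB, Nat.not_even_iff_odd.mpr h]

lemma Astr_one : Astr 1 = [0] := by rw [Astr_cons, Bstr_zero]
lemma Bstr_one : Bstr 1 = [1] := by rw [Bstr_cons, Astr_zero]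

lemma length_Astr (k : ℕ) : (Astr k).length = k := length_alternatingWord _ _ _
lemma length_Bstr (k : ℕ) : (Bstr k).length = k := length_alternatingWord _ _ _

/-- alternating word of length `n` with last letter `j`. -/
def awd (j : Fin 2) (n : ℕ) : List (Fin 2) := CoxeterSystem.alternatingWord (1 - j) j n

lemma awd_cons (j : Fin 2) (k : ℕ) :
    awd j (k + 1) = (if Even k then j else 1 - j) :: awd j k :=
  alternatingWord_succ' _ _ _

lemma Astr_eq_awd (k : ℕ) : Astr k = awd (lA k) k := by
  rw [Astr, awd]
  congr 1
  rcases Nat.even_or_odd k with h | h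
  · simp [lA, lB, h]
  · simp [lA, lB, Nat.not_even_iff_odd.mpr h]

lemma Bstr_eq_awd (k : ℕ) : Bstr k = awd (lB k) k := by
  rw [Bstr, awd]
  congr 1
  rcases Nat.even_or_odd k with h | h
  · simp [lA, lB, h]
  · simp [lA, lB, Nat.not_even_iff_odd.mpr h]

lemma length_awd (j : Fin 2) (n : ℕ) : (awd j n).length = n := length_alternatingWord _ _ _



lemma fin2_ne {x y : Fin 2} (h : x ≠ y) : x = 1 - y := by revert h; revert x y; decide

lemma fin2_sub_sub (j : Fin 2) : 1 - (1 - j) = j := by revert j; decide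

lemma reduced_alt : ∀ (n : ℕ) (l : List (Fin 2)), l.length = n → cs.IsReduced l →
    ∃ j, l = awd j n := by
  intro n
  induction n using Nat.strong_induction_on with
  | _ n ih =>
    intro l hlen hred
    match l, hlen with
    | [], hlen =>
      exact ⟨0, by rw [← hlen]; rfl⟩
    | [x], hlen =>
      refine ⟨x, ?_⟩
      rw [← hlen]
      show [x] = awd x 1
      rw [awd_cons]
      simp
      rfl
    | x :: y :: t, hlen =>
      have hxy : x ≠ y := by
        intro hxyeq
        subst hxyeq
        have h1 : cs.wordProd (x :: x :: t) = cs.wordProd t := by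
          rw [cs.wordProd_cons, cs.wordProd_cons, cs.simple_mul_simple_cancel_left]
        have h2 := cs.length_wordProd_le t
        rw [← h1] at h2
        simp only [CoxeterSystem.IsReduced, List.length_cons] at hred
        omega
      have htred : cs.IsReduced (y :: t) := by
        have := CoxeterSystem.IsReduced.drop (ω := x :: y :: t) hred (j := 1)
        simpa using this
      have hn : n = t.length + 2 := by simpa using hlen.symm
      obtain ⟨j, hj⟩ := ih (t.length + 1) (by omega) (y :: t) (by simp) htred
      have hy : y = (if Even t.length then j else 1 - j) := by
        rw [awd_cons] at hj
        exact (List.cons.injEq _ _ _ _).mp hj |>.1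
      have hx : x = (if Even (t.length + 1) then j else 1 - j) := by
        have hne := fin2_ne hxy
        have h2 : (1 : Fin 2) - (1 - j) = j := fin2_sub_sub j
        rcases Nat.even_or_odd t.length with h | h
        · rw [if_neg (by simp [Nat.even_add_one, Nat.not_even_iff_odd, Nat.odd_add_one, h])]
          rw [if_pos h] at hy
          rw [hne, hy]
        · rw [if_pos (Nat.even_add_one.mpr (Nat.not_even_iff_odd.mpr h))]
          rw [if_neg (Nat.not_even_iff_odd.mpr h)] at hy
          rw [hne, hy, h2]
      refine ⟨j, ?_⟩
      rw [← hlen]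
      show x :: y :: t = awd j (t.length + 2)
      rw [awd_cons, ← hx, hj]


lemma r_pow (x : ZMod m) (u : ℕ) :
    (DihedralGroup.r x) ^ u = DihedralGroup.r ((u : ZMod m) * x) := by
  induction u with
  | zero => simp
  | succ n ih =>
    rw [pow_succ, ih, DihedralGroup.r_mul_r]
    push_cast
    ring_nf

def dih (m : ℕ) : Fin 2 → DihedralGroup m := fun i => DihedralGroup.sr ((i.val : ℕ) : ZMod m)

lemma dih_liftable (hM : M 0 1 = m) : M.IsLiftable (dih m) := by
  have hM' : M 1 0 = m := by rw [M.symmetric]; exact hM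
  intro i i'
  by_cases h : i = i'
  · subst h
    rw [M.diagonal, pow_one]
    simp [dih, DihedralGroup.sr_mul_sr]
  · fin_cases i <;> fin_cases i' <;> [skip; skip; skip; skip]
    · exact absurd rfl h
    · show (dih m 0 * dih m 1) ^ (M 0 1) = 1
      rw [hM]
      simp only [dih, Fin.val_zero, Fin.val_one, Nat.cast_zero, Nat.cast_one,
        DihedralGroup.sr_mul_sr, r_pow]
      rw [sub_zero, show ((1 : ZMod m) : ZMod m) = 1 from rfl]
      simp [ZMod.natCast_self]
    · show (dih m 1 * dih m 0) ^ (M 1 0) = 1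
      rw [hM']
      simp only [dih, Fin.val_zero, Fin.val_one, Nat.cast_zero, Nat.cast_one,
        DihedralGroup.sr_mul_sr, r_pow]
      simp [ZMod.natCast_self]
    · exact absurd rfl h

def psi (hM : M 0 1 = m) : W →* DihedralGroup m := cs.lift ⟨dih m, dih_liftable hM⟩

lemma psi_simple (hM : M 0 1 = m) (i : Fin 2) :
    psi cs hM (cs.simple i) = DihedralGroup.sr ((i.val : ℕ) : ZMod m) :=
  cs.lift_apply_simple (dih_liftable hM) i

lemma psi_awd1 (hM : M 0 1 = m) (k : ℕ) :
    psi cs hM (cs.wordProd (awd 1 k)) =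
      if Even k then DihedralGroup.r ((k / 2 : ℕ) : ZMod m)
      else DihedralGroup.sr (1 + ((k / 2 : ℕ) : ZMod m)) := by
  have h1 : awd 1 k = CoxeterSystem.alternatingWord 0 1 k := by
    rw [awd]; norm_num
  rw [h1, cs.prod_alternatingWord_eq_mul_pow, map_mul, map_pow]
  have hs0 := psi_simple cs hM 0
  have hs1 := psi_simple cs hM 1
  rw [map_mul, hs0, hs1]
  simp only [Fin.val_zero, Fin.val_one, Nat.cast_zero, Nat.cast_one]
  rw [DihedralGroup.sr_mul_sr, sub_zero, r_pow, mul_one]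
  rcases Nat.even_or_odd k with h | h
  · rw [if_pos h, if_pos h, map_one, one_mul]
  · rw [if_neg (Nat.not_even_iff_odd.mpr h), if_neg (Nat.not_even_iff_odd.mpr h), hs1]
    simp only [Fin.val_one, Nat.cast_one]
    rw [DihedralGroup.sr_mul_r]

lemma psi_awd0 (hM : M 0 1 = m) (k : ℕ) :
    psi cs hM (cs.wordProd (awd 0 k)) =
      if Even k then DihedralGroup.r (-((k / 2 : ℕ) : ZMod m))
      else DihedralGroup.sr (-((k / 2 : ℕ) : ZMod m)) := by
  have h1 : awd 0 k = CoxeterSystem.alternatingWord 1 0 k := by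
    rw [awd]; norm_num
  rw [h1, cs.prod_alternatingWord_eq_mul_pow, map_mul, map_pow]
  have hs0 := psi_simple cs hM 0
  have hs1 := psi_simple cs hM 1
  rw [map_mul, hs0, hs1]
  simp only [Fin.val_zero, Fin.val_one, Nat.cast_zero, Nat.cast_one]
  rw [DihedralGroup.sr_mul_sr, zero_sub, r_pow]
  rcases Nat.even_or_odd k with h | h
  · rw [if_pos h, if_pos h, map_one, one_mul, mul_neg_one]
  · rw [if_neg (Nat.not_even_iff_odd.mpr h), if_neg (Nat.not_even_iff_odd.mpr h), hs0]
    simp only [Fin.val_zero, Nat.cast_zero]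
    rw [DihedralGroup.sr_mul_r, mul_neg_one, zero_add]


lemma cast_inj_of_lt (hm : 3 ≤ m) {A B : ℕ} (hA : A < m) (hB : B < m)
    (h : (A : ZMod m) = B) : A = B := by
  haveI : NeZero m := ⟨by omega⟩
  have := congrArg ZMod.val h
  rwa [ZMod.val_cast_of_lt hA, ZMod.val_cast_of_lt hB] at this

lemma dvd_of_cast_zero (hm : 3 ≤ m) {A : ℕ} (h : (A : ZMod m) = 0) : m ∣ A :=
  (ZMod.natCast_eq_zero_iff _ _).mp h


lemma psi_awd1_even (hM : M 0 1 = m) {k : ℕ} (hk : k % 2 = 0) :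
    psi cs hM (cs.wordProd (awd 1 k)) = DihedralGroup.r ((k / 2 : ℕ) : ZMod m) := by
  rw [psi_awd1 cs hM k, if_pos (Nat.even_iff.mpr hk)]

lemma psi_awd1_odd (hM : M 0 1 = m) {k : ℕ} (hk : k % 2 = 1) :
    psi cs hM (cs.wordProd (awd 1 k)) = DihedralGroup.sr (1 + ((k / 2 : ℕ) : ZMod m)) := by
  rw [psi_awd1 cs hM k, if_neg (by rw [Nat.even_iff]; omega)]

lemma psi_awd0_even (hM : M 0 1 = m) {k : ℕ} (hk : k % 2 = 0) :
    psi cs hM (cs.wordProd (awd 0 k)) = DihedralGroup.r (-((k / 2 : ℕ) : ZMod m)) := by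
  rw [psi_awd0 cs hM k, if_pos (Nat.even_iff.mpr hk)]

lemma psi_awd0_odd (hM : M 0 1 = m) {k : ℕ} (hk : k % 2 = 1) :
    psi cs hM (cs.wordProd (awd 0 k)) = DihedralGroup.sr (-((k / 2 : ℕ) : ZMod m)) := by
  rw [psi_awd0 cs hM k, if_neg (by rw [Nat.even_iff]; omega)]

lemma inj_awd (hm : 3 ≤ m) (hM : M 0 1 = m) (j j' : Fin 2) (n k : ℕ)
    (hnk : n < k) (hkm : k ≤ m) :
    cs.wordProd (awd j n) ≠ cs.wordProd (awd j' k) := by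
  intro h
  have hcases : ∀ x : Fin 2, x = 0 ∨ x = 1 := by decide
  have hψ := congrArg (psi cs hM) h
  rcases Nat.mod_two_eq_zero_or_one n with hn | hn <;>
    rcases Nat.mod_two_eq_zero_or_one k with hk | hk <;>
    rcases hcases j with rfl | rfl <;> rcases hcases j' with rfl | rfl <;>
    (first
      | rw [psi_awd0_even cs hM hn, psi_awd0_even cs hM hk] at hψ
      | rw [psi_awd0_even cs hM hn, psi_awd0_odd cs hM hk] at hψ
      | rw [psi_awd0_even cs hM hn, psi_awd1_even cs hM hk] at hψ
      | rw [psi_awd0_even cs hM hn, psi_awd1_odd cs hM hk] at hψ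
      | rw [psi_awd0_odd cs hM hn, psi_awd0_even cs hM hk] at hψ
      | rw [psi_awd0_odd cs hM hn, psi_awd0_odd cs hM hk] at hψ
      | rw [psi_awd0_odd cs hM hn, psi_awd1_even cs hM hk] at hψ
      | rw [psi_awd0_odd cs hM hn, psi_awd1_odd cs hM hk] at hψ
      | rw [psi_awd1_even cs hM hn, psi_awd0_even cs hM hk] at hψ
      | rw [psi_awd1_even cs hM hn, psi_awd0_odd cs hM hk] at hψ
      | rw [psi_awd1_even cs hM hn, psi_awd1_even cs hM hk] at hψ
      | rw [psi_awd1_even cs hM hn, psi_awd1_odd cs hM hk] at hψ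
      | rw [psi_awd1_odd cs hM hn, psi_awd0_even cs hM hk] at hψ
      | rw [psi_awd1_odd cs hM hn, psi_awd0_odd cs hM hk] at hψ
      | rw [psi_awd1_odd cs hM hn, psi_awd1_even cs hM hk] at hψ
      | rw [psi_awd1_odd cs hM hn, psi_awd1_odd cs hM hk] at hψ) <;>
    first
      | (injection hψ; done)
      | (injection hψ with hψ
         first
          | (have h0 : n / 2 = k / 2 := by
               apply cast_inj_of_lt hm (by omega) (by omega)
               first
                | exact hψ
                | exact neg_inj.mp hψ
                | exact add_left_cancel hψ
             omega)
          | (have h0 : m ∣ (n / 2 + k / 2) := by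
               apply dvd_of_cast_zero hm
               push_cast
               linear_combination hψ
             have h1 := Nat.le_of_dvd (by omega) h0
             omega)
          | (have h0 : m ∣ (n / 2 + k / 2) := by
               apply dvd_of_cast_zero hm
               push_cast
               linear_combination -hψ
             have h1 := Nat.le_of_dvd (by omega) h0
             omega)
          | (have h0 : m ∣ (1 + n / 2 + k / 2) := by
               apply dvd_of_cast_zero hm
               push_cast
               linear_combination hψ
             have h1 := Nat.le_of_dvd (by omega) h0
             omega)
          | (have h0 : m ∣ (1 + n / 2 + k / 2) := by
               apply dvd_of_cast_zero hm
               push_cast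
               linear_combination -hψ
             have h1 := Nat.le_of_dvd (by omega) h0
             omega))

lemma isReduced_awd (hm : 3 ≤ m) (hM : M 0 1 = m) (j : Fin 2) {k : ℕ} (hk : k ≤ m) :
    cs.IsReduced (awd j k) := by
  obtain ⟨ω, hω, hw⟩ := cs.exists_reduced_word (cs.wordProd (awd j k))
  replace hω : ω.length = cs.length (cs.wordProd (awd j k)) := by rw [hw]; exact hω.symm
  have hred : cs.IsReduced ω := by
    rw [CoxeterSystem.IsReduced, ← hw, hω]
  obtain ⟨j', hj'⟩ := reduced_alt cs ω.length ω rfl hred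
  have hle : cs.length (cs.wordProd (awd j k)) ≤ k := by
    have := cs.length_wordProd_le (awd j k)
    rwa [length_awd] at this
  rcases Nat.lt_or_ge (cs.length (cs.wordProd (awd j k))) k with hlt | hge
  · exfalso
    refine inj_awd cs hm hM j' j ω.length k ?_ hk ?_
    · rw [hω]; exact hlt
    · rw [← hj']; exact hw.symm
  · rw [CoxeterSystem.IsReduced, length_awd]
    omega

lemma length_le_m (hm : 3 ≤ m) (hM : M 0 1 = m) (w : W) : cs.length w ≤ m := by
  obtain ⟨ω, hω, hw⟩ := cs.exists_reduced_word w
  replace hω : ω.length = cs.length w := by rw [hw]; exact hω.symm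
  have hred : cs.IsReduced ω := by
    rw [CoxeterSystem.IsReduced, ← hw, hω]
  obtain ⟨j, hj⟩ := reduced_alt cs ω.length ω rfl hred
  by_contra hcon
  have hcases : ∀ x : Fin 2, x = 0 ∨ x = 1 := by decide
  have hMj : M (1 - j) j = m := by
    rcases hcases j with rfl | rfl
    · show M 1 0 = m
      rw [M.symmetric]; exact hM
    · show M 0 1 = m
      exact hM
  have hlen : M (1 - j) j < ω.length := by omega
  have := cs.not_isReduced_alternatingWord (1 - j) j (by omega) hlen
  rw [← awd] at this
  rw [hj] at hred
  exact this hred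



section Artin

variable (M : CoxeterMatrix (Fin 2))

lemma artin_braid (i j : Fin 2) :
    ((CoxeterSystem.braidWord M i j).map (artinGen M)).prod =
      ((CoxeterSystem.braidWord M j i).map (artinGen M)).prod := by
  have hmem : (((CoxeterSystem.braidWord M i j).map FreeGroup.of).prod *
      (((CoxeterSystem.braidWord M j i).map FreeGroup.of).prod)⁻¹) ∈ artinRels M :=
    Set.mem_iUnion.mpr ⟨i, Set.mem_iUnion.mpr ⟨j, rfl⟩⟩
  have h1 : PresentedGroup.mk (artinRels M)
      (((CoxeterSystem.braidWord M i j).map FreeGroup.of).prod *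
        (((CoxeterSystem.braidWord M j i).map FreeGroup.of).prod)⁻¹) = 1 := by
    apply (QuotientGroup.eq_one_iff _).mpr
    exact Subgroup.subset_normalClosure hmem
  have hmap : ∀ l : List (Fin 2), ((l.map (artinGen M)).prod) =
      PresentedGroup.mk (artinRels M) ((l.map FreeGroup.of).prod) := by
    intro l
    rw [map_list_prod, List.map_map]
    rfl
  rw [hmap, hmap]
  rw [map_mul, map_inv] at h1
  exact (mul_inv_eq_one.mp h1)

def pA (k : ℕ) : ArtinGroup M := ((Astr k).map (artinGen M)).prod
def pB (k : ℕ) : ArtinGroup M := ((Bstr k).map (artinGen M)).prod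

lemma pA_zero : pA M 0 = 1 := by simp [pA, Astr_zero]
lemma pB_zero : pB M 0 = 1 := by simp [pB, Bstr_zero]

lemma pA_cons (k : ℕ) : pA M (k + 1) = artinGen M 0 * pB M k := by
  rw [pA, Astr_cons]; simp [pB]

lemma pB_cons (k : ℕ) : pB M (k + 1) = artinGen M 1 * pA M k := by
  rw [pB, Bstr_cons]; simp [pA]

lemma pA_concat (k : ℕ) : pA M (k + 1) = pA M k * artinGen M (lA (k + 1)) := by
  rw [pA, Astr_succ]; simp [pA]

lemma pB_concat (k : ℕ) : pB M (k + 1) = pB M k * artinGen M (lB (k + 1)) := by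
  rw [pB, Bstr_succ]; simp [pB]

lemma gen_mem (i : Fin 2) : artinGen M i ∈ artinPos M :=
  Submonoid.subset_closure ⟨i, rfl⟩

lemma pA_mem (k : ℕ) : pA M k ∈ artinPos M := by
  apply Submonoid.list_prod_mem
  intro x hx
  rcases List.mem_map.mp hx with ⟨i, _, rfl⟩
  exact gen_mem M i

lemma pB_mem (k : ℕ) : pB M k ∈ artinPos M := by
  apply Submonoid.list_prod_mem
  intro x hx
  rcases List.mem_map.mp hx with ⟨i, _, rfl⟩
  exact gen_mem M i

lemma pA_prefix {j n : ℕ} (h : j ≤ n) : ∃ t ∈ artinPos M, pA M n = pA M j * t := by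
  induction n, h using Nat.le_induction with
  | base => exact ⟨1, Submonoid.one_mem _, (mul_one _).symm⟩
  | succ n hn ih =>
    obtain ⟨t, ht, hEq⟩ := ih
    exact ⟨t * artinGen M (lA (n + 1)), Submonoid.mul_mem _ ht (gen_mem M _),
      by rw [pA_concat, hEq, mul_assoc]⟩

lemma pB_prefix {j n : ℕ} (h : j ≤ n) : ∃ t ∈ artinPos M, pB M n = pB M j * t := by
  induction n, h using Nat.le_induction with
  | base => exact ⟨1, Submonoid.one_mem _, (mul_one _).symm⟩
  | succ n hn ih =>
    obtain ⟨t, ht, hEq⟩ := ih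
    exact ⟨t * artinGen M (lB (n + 1)), Submonoid.mul_mem _ ht (gen_mem M _),
      by rw [pB_concat, hEq, mul_assoc]⟩

variable {M}

lemma pA_eq_pB {m : ℕ} (hM : M 0 1 = m) : pA M m = pB M m := by
  have hM' : M 1 0 = m := by rw [M.symmetric]; exact hM
  have hb := artin_braid M 0 1
  rcases Nat.even_or_odd m with h | h
  · have e1 : Astr m = CoxeterSystem.braidWord M 0 1 := by
      show Astr m = CoxeterSystem.alternatingWord 0 1 (M 0 1)
      rw [hM, Astr]
      congr 1 <;> simp [lA, lB, h]
    have e2 : Bstr m = CoxeterSystem.braidWord M 1 0 := by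
      show Bstr m = CoxeterSystem.alternatingWord 1 0 (M 1 0)
      rw [hM', Bstr]
      congr 1 <;> simp [lA, lB, h]
    rw [pA, pB, e1, e2, hb]
  · have e1 : Astr m = CoxeterSystem.braidWord M 1 0 := by
      show Astr m = CoxeterSystem.alternatingWord 1 0 (M 1 0)
      rw [hM', Astr]
      congr 1 <;> simp [lA, lB, Nat.not_even_iff_odd.mpr h]
    have e2 : Bstr m = CoxeterSystem.braidWord M 0 1 := by
      show Bstr m = CoxeterSystem.alternatingWord 0 1 (M 0 1)
      rw [hM, Bstr]
      congr 1 <;> simp [lA, lB, Nat.not_even_iff_odd.mpr h]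
    rw [pA, pB, e1, e2, hb]

lemma swap0 {m : ℕ} (hM : M 0 1 = m) :
    pA M m * artinGen M 0 = artinGen M (lB m) * pA M m := by
  rcases Nat.even_or_odd m with h | h
  · have h0 : lA (m + 1) = 0 := by
      simp [lA, Nat.even_add_one, h]
    have h1 : lB m = 0 := by simp [lB, h]
    rw [h1, ← h0, ← pA_concat, pA_cons, pA_eq_pB hM] <;> rw [h0]
  · have h0 : lB (m + 1) = 0 := by
      simp [lB, Nat.even_add_one, Nat.not_even_iff_odd.mpr h]
    have h1 : lB m = 1 := by simp [lB, Nat.not_even_iff_odd.mpr h]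
    rw [h1, pA_eq_pB hM, ← h0, ← pB_concat, pB_cons, pA_eq_pB hM] <;> rw [h0]

lemma swap1 {m : ℕ} (hM : M 0 1 = m) :
    pA M m * artinGen M 1 = artinGen M (lA m) * pA M m := by
  rcases Nat.even_or_odd m with h | h
  · have h0 : lB (m + 1) = 1 := by
      simp [lB, Nat.even_add_one, h]
    have h1 : lA m = 1 := by simp [lA, h]
    rw [h1, pA_eq_pB hM, ← h0, ← pB_concat, pB_cons, pA_eq_pB hM] <;> rw [h0]
  · have h0 : lA (m + 1) = 1 := by
      simp [lA, Nat.even_add_one, Nat.not_even_iff_odd.mpr h]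
    have h1 : lA m = 0 := by simp [lA, Nat.not_even_iff_odd.mpr h]
    rw [h1, ← h0, ← pA_concat, pA_cons, pA_eq_pB hM] <;> rw [h0]

lemma conj_p {m : ℕ} (hM : M 0 1 = m) : ∀ j : ℕ,
    pA M m * pA M j = (if Even m then pA M j else pB M j) * pA M m ∧
    pA M m * pB M j = (if Even m then pB M j else pA M j) * pA M m := by
  intro j
  induction j with
  | zero =>
    rw [pA_zero, pB_zero]
    constructor <;> split <;> simp
  | succ n ih =>
    rcases Nat.even_or_odd m with h | h
    · have h1 : lB m = 0 := by simp [lB, h]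
      have h2 : lA m = 1 := by simp [lA, h]
      simp only [if_pos h] at ih ⊢
      constructor
      · rw [pA_cons, ← mul_assoc, swap0 hM, h1, mul_assoc, ih.2, mul_assoc]
      · rw [pB_cons, ← mul_assoc, swap1 hM, h2, mul_assoc, ih.1, mul_assoc]
    · have h1 : lB m = 1 := by simp [lB, Nat.not_even_iff_odd.mpr h]
      have h2 : lA m = 0 := by simp [lA, Nat.not_even_iff_odd.mpr h]
      simp only [if_neg (Nat.not_even_iff_odd.mpr h)] at ih ⊢
      constructor
      · rw [pA_cons, ← mul_assoc, swap0 hM, h1, mul_assoc, ih.2, pB_cons, mul_assoc]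
      · rw [pB_cons, ← mul_assoc, swap1 hM, h2, mul_assoc, ih.1, pA_cons, mul_assoc]

/-- the generator `bc = b_s b_t`. -/
def cgen (M : CoxeterMatrix (Fin 2)) : ArtinGroup M := artinGen M 0 * artinGen M 1

/-- the permutation `x ↦ c x⁻¹`. -/
def zperm (M : CoxeterMatrix (Fin 2)) : Equiv.Perm (ArtinGroup M) where
  toFun x := cgen M * x⁻¹
  invFun x := x⁻¹ * cgen M
  left_inv x := by simp [mul_assoc]
  right_inv x := by simp [mul_assoc]

/-- the bi-infinite sequence of entries in the Hurwitz orbit. -/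
def zseq (M : CoxeterMatrix (Fin 2)) (k : ℤ) : ArtinGroup M :=
  ((zperm M) ^ k) (artinGen M 1)

lemma zseq_zero : zseq M 0 = artinGen M 1 := by simp [zseq]

lemma zseq_succ (k : ℤ) : zseq M (k + 1) = cgen M * (zseq M k)⁻¹ := by
  rw [zseq, zseq, add_comm, zpow_add, zpow_one, Equiv.Perm.mul_apply]
  rfl

lemma zseq_mul (k : ℤ) : zseq M (k + 1) * zseq M k = cgen M := by
  rw [zseq_succ]
  simp [mul_assoc]

lemma zseq_nat : ∀ i : ℕ, zseq M ((i : ℤ) + 1) = pA M (i + 1) * (pA M i)⁻¹ := by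
  intro i
  induction i with
  | zero =>
    simp only [Nat.cast_zero]
    rw [zseq_succ, zseq_zero, pA_cons, pA_zero, pB_zero, cgen]
    simp
  | succ n ih =>
    have : ((n + 1 : ℕ) : ℤ) + 1 = ((n : ℤ) + 1) + 1 := by push_cast; ring
    rw [this, zseq_succ, ih]
    have h2 : pA M (n + 1 + 1) = cgen M * pA M n := by
      rw [pA_cons, pB_cons, cgen, mul_assoc]
    rw [h2]
    group

lemma zseq_m {m : ℕ} (hm : 1 ≤ m) (hM : M 0 1 = m) : zseq M (m : ℤ) = artinGen M 1 := by
  obtain ⟨i, rfl⟩ : ∃ i, m = i + 1 := ⟨m - 1, by omega⟩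
  have : ((i + 1 : ℕ) : ℤ) = (i : ℤ) + 1 := by push_cast; ring
  rw [this, zseq_nat, pA_eq_pB hM, pB_cons]
  group

lemma zseq_reduce {m : ℕ} (hm : 3 ≤ m) (hM : M 0 1 = m) (k : ℤ) :
    ∃ i : ℕ, 1 ≤ i ∧ i ≤ m ∧ zseq M k = zseq M (i : ℤ) := by
  have hm0 : (0 : ℤ) < (m : ℤ) := by positivity
  have hfix : Function.IsFixedPt (zperm M ^ (m : ℤ)) (artinGen M 1) := zseq_m (by omega) hM
  have hper : zseq M k = zseq M (k % (m : ℤ)) := by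
    conv_lhs => rw [← Int.emod_add_mul_ediv k (m : ℤ)]
    rw [zseq, zpow_add, Equiv.Perm.mul_apply, zpow_mul]
    rw [Function.IsFixedPt.perm_zpow hfix (k / (m : ℤ))]
    rfl
  have h0 : 0 ≤ k % (m : ℤ) := Int.emod_nonneg k (by omega)
  have h1 : k % (m : ℤ) < m := Int.emod_lt_of_pos k hm0
  by_cases hz : k % (m : ℤ) = 0
  · refine ⟨m, by omega, le_refl m, ?_⟩
    rw [hper, hz, zseq_zero, zseq_m (by omega) hM]
  · refine ⟨(k % (m : ℤ)).toNat, by omega, by omega, ?_⟩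
    rw [hper]
    congr 1
    omega

lemma two_list_eq {G : Type} (A Bl : List G) (u v p q : G)
    (h : A ++ u :: v :: Bl = [p, q]) : A = [] ∧ Bl = [] ∧ u = p ∧ v = q := by
  cases A with
  | nil =>
    simp only [List.nil_append, List.cons.injEq] at h
    exact ⟨rfl, h.2.2, h.1, h.2.1⟩
  | cons a A =>
    exfalso
    have := congrArg List.length h
    simp at this
    omega

lemma orbit_char : ∀ l l', Relation.EqvGen HurwitzMove l l' →
    ((∃ k : ℤ, l = [zseq M (k + 1), zseq M k]) ↔
      (∃ k : ℤ, l' = [zseq M (k + 1), zseq M k])) := by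
  intro l l' h
  induction h with
  | rel x y hr =>
    obtain ⟨A, Bl, u, v, hx, hy⟩ := hr
    constructor
    · rintro ⟨k, hk⟩
      obtain ⟨hA, hB, hu, hv⟩ := two_list_eq A Bl u v _ _ (hx.symm.trans hk)
      refine ⟨k + 1, ?_⟩
      rw [hy, hA, hB]
      simp only [List.nil_append]
      rw [hu, hv, zseq_succ (k + 1), ← zseq_mul (M := M) k]
    · rintro ⟨k, hk⟩
      obtain ⟨hA, hB, hu, hv⟩ := two_list_eq A Bl (u * v * u⁻¹) u _ _ (hy.symm.trans hk)
      refine ⟨k - 1, ?_⟩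
      have hk1 : k - 1 + 1 = k := by ring
      have hzk1 : zseq M (k - 1) = (zseq M k)⁻¹ * cgen M := by
        have h2 := zseq_mul (M := M) (k - 1)
        rw [hk1] at h2
        rw [← h2]
        group
      have hv2 : v = zseq M (k - 1) := by
        have e1 : v = u⁻¹ * (u * v * u⁻¹) * u := by group
        rw [hu, hv] at e1
        rw [hzk1, ← zseq_mul (M := M) k, e1]
        group
      rw [hx, hA, hB]
      simp only [List.nil_append]
      rw [hk1, hv, hv2]
  | refl => exact Iff.rfl
  | symm a b _ ih => exact ih.symm
  | trans a b c _ _ ih1 ih2 => exact ih1.trans ih2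

end Artin

lemma deltaMul {m : ℕ} (hM : M 0 1 = m) (i' : ℕ) (h : i' + 1 ≤ m) :
    pA M m * (pA M (i' + 1) * (pA M i')⁻¹) ∈ artinPos M := by
  rcases Nat.even_or_odd m with h' | h'
  · have c1 := (conj_p hM (i' + 1)).1
    have c2 := (conj_p hM i').1
    rw [if_pos h'] at c1 c2
    obtain ⟨t, ht, hEq⟩ := pA_prefix M (show i' ≤ m by omega)
    have e2 : pA M m * (pA M i')⁻¹ = (pA M i')⁻¹ * pA M m := by
      calc pA M m * (pA M i')⁻¹
          = (pA M i')⁻¹ * (pA M i' * pA M m) * (pA M i')⁻¹ := by group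
        _ = (pA M i')⁻¹ * (pA M m * pA M i') * (pA M i')⁻¹ := by rw [c2]
        _ = (pA M i')⁻¹ * pA M m := by group
    have key : pA M m * (pA M (i' + 1) * (pA M i')⁻¹) = pA M (i' + 1) * t := by
      calc pA M m * (pA M (i' + 1) * (pA M i')⁻¹)
          = (pA M m * pA M (i' + 1)) * (pA M i')⁻¹ := by group
        _ = pA M (i' + 1) * (pA M m * (pA M i')⁻¹) := by rw [c1]; group
        _ = pA M (i' + 1) * ((pA M i')⁻¹ * pA M m) := by rw [e2]
        _ = pA M (i' + 1) * ((pA M i')⁻¹ * (pA M i' * t)) := by rw [← hEq]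
        _ = pA M (i' + 1) * t := by group
    rw [key]
    exact Submonoid.mul_mem _ (pA_mem M _) ht
  · have c1 := (conj_p hM (i' + 1)).1
    have c2 := (conj_p hM i').1
    rw [if_neg (Nat.not_even_iff_odd.mpr h')] at c1 c2
    obtain ⟨t, ht, hEq⟩ := pB_prefix M (show i' ≤ m by omega)
    rw [← pA_eq_pB hM] at hEq
    have e2 : pA M m * (pA M i')⁻¹ = (pB M i')⁻¹ * pA M m := by
      calc pA M m * (pA M i')⁻¹
          = (pB M i')⁻¹ * (pB M i' * pA M m) * (pA M i')⁻¹ := by group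
        _ = (pB M i')⁻¹ * (pA M m * pA M i') * (pA M i')⁻¹ := by rw [c2]
        _ = (pB M i')⁻¹ * pA M m := by group
    have key : pA M m * (pA M (i' + 1) * (pA M i')⁻¹) = pB M (i' + 1) * t := by
      calc pA M m * (pA M (i' + 1) * (pA M i')⁻¹)
          = (pA M m * pA M (i' + 1)) * (pA M i')⁻¹ := by group
        _ = pB M (i' + 1) * (pA M m * (pA M i')⁻¹) := by rw [c1]; group
        _ = pB M (i' + 1) * ((pB M i')⁻¹ * pA M m) := by rw [e2]
        _ = pB M (i' + 1) * ((pB M i')⁻¹ * (pB M i' * t)) := by rw [← hEq]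
        _ = pB M (i' + 1) * t := by group
    rw [key]
    exact Submonoid.mul_mem _ (pB_mem M _) ht

lemma deltaDiv {m : ℕ} (i' : ℕ) (h : i' + 1 ≤ m) :
    (pA M (i' + 1) * (pA M i')⁻¹)⁻¹ * pA M m ∈ artinPos M := by
  obtain ⟨t, ht, hEq⟩ := pA_prefix M h
  have key : (pA M (i' + 1) * (pA M i')⁻¹)⁻¹ * pA M m = pA M i' * t := by
    rw [hEq]; group
  rw [key]
  exact Submonoid.mul_mem _ (pA_mem M _) ht

lemma awd_prod_eq_pA {m : ℕ} (hM : M 0 1 = m) (j : Fin 2) :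
    ((awd j m).map (artinGen M)).prod = pA M m := by
  have hcases : ∀ x : Fin 2, x = 0 ∨ x = 1 := by decide
  rcases Nat.even_or_odd m with hpar | hpar <;> rcases hcases j with rfl | rfl
  · have h0 : lB m = 0 := by simp [lB, hpar]
    rw [← h0, ← Bstr_eq_awd]
    exact (pA_eq_pB hM).symm
  · have h0 : lA m = 1 := by simp [lA, hpar]
    rw [← h0, ← Astr_eq_awd]
    rfl
  · have h0 : lA m = 0 := by simp [lA, Nat.not_even_iff_odd.mpr hpar]
    rw [← h0, ← Astr_eq_awd]
    rfl
  · have h0 : lB m = 1 := by simp [lB, Nat.not_even_iff_odd.mpr hpar]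
    rw [← h0, ← Bstr_eq_awd]
    exact (pA_eq_pB hM).symm

end DualAux

open DualAux

/-- in the dihedral type `I₂(m)` (`m ≥ 3`) with `S = {s, t}` and `c = st`,
every simple dual braid for `c` — that is, the identity, `bc = b_s b_t`, and every
element of `T_c` — can be written `b_x b_y⁻¹` with `x, y ∈ W`, hence lies in the
interval `[Δ⁻¹, Δ]`, i.e. is a rational permutation braid. -/
theorem simple_dual_braids_are_rational_permutation_braids_dihedral
    {m : ℕ} (hm : 3 ≤ m) {W : Type} [Group W] [Finite W]
    {M : CoxeterMatrix (Fin 2)} (hM : M 0 1 = m)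
    (cs : CoxeterSystem M W)
    (bw : W → ArtinGroup M)
    (hbw : ∀ l : List (Fin 2), cs.IsReduced l →
      bw (cs.wordProd l) = (l.map (artinGen M)).prod)
    (w₀ : W) (hw₀ : ∀ w : W, cs.length w ≤ cs.length w₀)
    (Δ : ArtinGroup M) (hΔ : Δ = bw w₀)
    (Tc : Set (ArtinGroup M))
    (hTc : Tc = { β | ∃ l ∈ hurwitzOrbit [artinGen M 0, artinGen M 1], β ∈ l }) :
    ∀ β : ArtinGroup M,
      (β = 1 ∨ β = artinGen M 0 * artinGen M 1 ∨ β ∈ Tc) →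
      (∃ x y : W, β = bw x * (bw y)⁻¹) ∧ (braidLE Δ⁻¹ β ∧ braidLE β Δ) := by
  intro β hβ
  have hAred : ∀ k, k ≤ m → cs.IsReduced (Astr k) := by
    intro k hk
    rw [Astr_eq_awd]
    exact isReduced_awd cs hm hM _ hk
  have hbwA : ∀ k, k ≤ m → bw (cs.wordProd (Astr k)) = pA M k := fun k hk =>
    hbw _ (hAred k hk)
  -- identification of Δ
  have hΔA : Δ = pA M m := by
    have hredm := hAred m le_rfl
    have h1 : cs.length (cs.wordProd (Astr m)) = m := by
      rw [CoxeterSystem.IsReduced] at hredm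
      rw [hredm, length_Astr]
    have h2 : cs.length w₀ = m :=
      le_antisymm (length_le_m cs hm hM w₀) (by rw [← h1]; exact hw₀ _)
    obtain ⟨ω, hω, hwp⟩ := cs.exists_reduced_word w₀
    replace hω : ω.length = cs.length w₀ := by rw [hwp]; exact hω.symm
    have hred : cs.IsReduced ω := by rw [CoxeterSystem.IsReduced, ← hwp, hω]
    obtain ⟨j, hj⟩ := reduced_alt cs ω.length ω rfl hred
    have hlen : ω.length = m := by rw [hω, h2]
    rw [hlen] at hj
    rw [hΔ, hwp, hbw ω hred, hj]
    exact awd_prod_eq_pA hM j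
  rcases hβ with rfl | rfl | hT
  · -- β = 1
    refine ⟨⟨1, 1, by simp⟩, ?_, ?_⟩
    · show (Δ⁻¹)⁻¹ * 1 ∈ artinPos M
      rw [inv_inv, mul_one, hΔA]
      exact pA_mem M m
    · show (1 : ArtinGroup M)⁻¹ * Δ ∈ artinPos M
      rw [inv_one, one_mul, hΔA]
      exact pA_mem M m
  · -- β = bc
    have hbw1 : bw 1 = 1 := by
      have h0 : cs.IsReduced [] := by
        rw [CoxeterSystem.IsReduced]
        simp
      have := hbw [] h0
      simpa using this
    have hpA2 : pA M 2 = artinGen M 0 * artinGen M 1 := by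
      show pA M (1 + 1) = _
      rw [pA_cons, pB_cons, pA_zero, mul_one]
    refine ⟨⟨cs.wordProd (Astr 2), 1, ?_⟩, ?_, ?_⟩
    · rw [hbwA 2 (by omega), hbw1, hpA2]
      simp
    · show (Δ⁻¹)⁻¹ * (artinGen M 0 * artinGen M 1) ∈ artinPos M
      rw [inv_inv, hΔA]
      have key : pA M m * (artinGen M 0 * artinGen M 1) =
          artinGen M (lB m) * (artinGen M (lA m) * pA M m) := by
        calc pA M m * (artinGen M 0 * artinGen M 1)
            = (pA M m * artinGen M 0) * artinGen M 1 := by group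
          _ = artinGen M (lB m) * (pA M m * artinGen M 1) := by rw [swap0 hM]; group
          _ = artinGen M (lB m) * (artinGen M (lA m) * pA M m) := by rw [swap1 hM]
      rw [key]
      exact Submonoid.mul_mem _ (gen_mem M _)
        (Submonoid.mul_mem _ (gen_mem M _) (pA_mem M m))
    · show (artinGen M 0 * artinGen M 1)⁻¹ * Δ ∈ artinPos M
      obtain ⟨i, rfl⟩ : ∃ i, m = i + 2 := ⟨m - 2, by omega⟩
      rw [hΔA, show i + 2 = (i + 1) + 1 from rfl, pA_cons, pB_cons]
      have key : (artinGen M 0 * artinGen M 1)⁻¹ *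
          (artinGen M 0 * (artinGen M 1 * pA M i)) = pA M i := by group
      rw [key]
      exact pA_mem M i
  · -- β ∈ Tc
    rw [hTc] at hT
    obtain ⟨l, hl, hβl⟩ := hT
    have hstart : [artinGen M 0, artinGen M 1] = [zseq M (0 + 1), zseq M 0] := by
      rw [zseq_zero]
      congr 1
      rw [zseq_succ, zseq_zero, cgen]
      group
    obtain ⟨k, hk⟩ := (orbit_char _ _ hl).mp ⟨0, hstart⟩
    have hβz : ∃ k' : ℤ, β = zseq M k' := by
      rw [hk] at hβl
      simp only [List.mem_cons, List.not_mem_nil, or_false] at hβl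
      rcases hβl with h | h
      · exact ⟨k + 1, h⟩
      · exact ⟨k, h⟩
    obtain ⟨k', rfl⟩ := hβz
    obtain ⟨i, hi1, him, hik⟩ := zseq_reduce hm hM k'
    obtain ⟨i', rfl⟩ : ∃ i', i = i' + 1 := ⟨i - 1, by omega⟩
    have hcast : ((i' + 1 : ℕ) : ℤ) = (i' : ℤ) + 1 := by push_cast; ring
    have hform : zseq M k' = pA M (i' + 1) * (pA M i')⁻¹ := by
      rw [hik, hcast, zseq_nat]
    refine ⟨⟨cs.wordProd (Astr (i' + 1)), cs.wordProd (Astr i'), ?_⟩, ?_, ?_⟩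
    · rw [hbwA _ him, hbwA _ (by omega)]
      exact hform
    · show (Δ⁻¹)⁻¹ * zseq M k' ∈ artinPos M
      rw [inv_inv, hΔA, hform]
      exact deltaMul hM i' him
    · show (zseq M k')⁻¹ * Δ ∈ artinPos M
      rw [hΔA, hform]
      exact deltaDiv i' him
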